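/- Let A be a Hopf algebra, B a left coideal subalgebra, and R a right ideal of B⁺ with canonical projection p : B⁺ → B⁺/R. Then there is a unique equivariant derivation δ_R of B such that a·δ_R(b) = a b₍₁₎ ⊗ p(b₍₂₎ − ε(b₍₂₎)1) for all a, b ∈ B, where the bimodule Γ(δ_R) ⊆ A ⊗ B⁺/R carries the left action c·(a δb) = (ca) δb and the right action (a δb)·c = a δ(bc) − ab δc. -/

import Mathlib

open TensorProduct

noncomputable section

/-- A derivation of an algebra `B` into a `B`-bimodule `M`, the bimodule
structure being given by commuting unital left and right actions. -/
structure BimodDeriv (B M : Type) [Ring B] [Algebra ℂ B]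
    [AddCommGroup M] [Module ℂ M] where
  l : B →ₗ[ℂ] M →ₗ[ℂ] M
  r : B →ₗ[ℂ] M →ₗ[ℂ] M
  l_mul : ∀ a b m, l (a * b) m = l a (l b m)
  l_one : ∀ m, l 1 m = m
  r_mul : ∀ a b m, r (a * b) m = r b (r a m)
  r_one : ∀ m, r 1 m = m
  lr_comm : ∀ a b m, l a (r b m) = r b (l a m)
  d : B →ₗ[ℂ] M
  leibniz : ∀ a b, d (a * b) = l a (d b) + r b (d a)

variable (A : Type) [Ring A] [HopfAlgebra ℂ A] (B : Subalgebra ℂ A)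

/-- The counit of `A` restricted to the subalgebra `B`. -/
def epsB : ↥B →ₐ[ℂ] ℂ := (Bialgebra.counitAlgHom ℂ A).comp B.val

/-- `B⁺ = B ∩ ker ε`. -/
def Bplus : Submodule ℂ ↥B := LinearMap.ker (epsB A B).toLinearMap

/-- `b ↦ b⁺ = b − ε(b)1` on `B`. -/
def plusB : ↥B →ₗ[ℂ] ↥B :=
  LinearMap.id - (Algebra.linearMap ℂ ↥B).comp (epsB A B).toLinearMap

lemma plusB_mem (b : ↥B) : plusB A B b ∈ Bplus A B := by
  simp [plusB, Bplus, epsB, Algebra.algebraMap_eq_smul_one]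

/-- `b ↦ b⁺` viewed as a map into `B⁺`. -/
def plusBc : ↥B →ₗ[ℂ] ↥(Bplus A B) :=
  (plusB A B).codRestrict (Bplus A B) (plusB_mem A B)

variable (comulB : ↥B →ₗ[ℂ] A ⊗[ℂ] ↥B)

/-- The Sweedler-type map `a ⊗ b ↦ a₍₁₎b₍₁₎ ⊗ a₍₂₎·δ(b₍₂₎)` attached to a
derivation `δ` of the left coideal subalgebra `B`. -/
def sweedlerMap {M : Type} [AddCommGroup M] [Module ℂ M]
    (δ : BimodDeriv ↥B M) : ↥B ⊗[ℂ] ↥B →ₗ[ℂ] A ⊗[ℂ] M :=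
  (TensorProduct.map (LinearMap.mul' ℂ A)
      (TensorProduct.lift
        (LinearMap.mk₂ ℂ (fun a b => δ.l a (δ.d b))
          (fun a a' b => by simp)
          (fun c a b => by simp)
          (fun a b b' => by simp)
          (fun c a b => by simp)))) ∘ₗ
    (TensorProduct.tensorTensorTensorComm ℂ A ↥B A ↥B).toLinearMap ∘ₗ
    (TensorProduct.map comulB comulB)

/-- Equivariance (covariance) of a derivation `δ` of a left coideal
subalgebra `B` of `A`: the assignment `a·δb ↦ a₍₁₎b₍₁₎ ⊗ a₍₂₎·δb₍₂₎` is
well-defined on `Γ(δ)`. -/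
def IsEquivariant {M : Type} [AddCommGroup M] [Module ℂ M]
    (δ : BimodDeriv ↥B M) : Prop :=
  ∀ L : List (↥B × ↥B),
    (L.map fun p => δ.l p.1 (δ.d p.2)).sum = 0 →
    (L.map fun p => sweedlerMap A B comulB δ (p.1 ⊗ₜ[ℂ] p.2)).sum = 0


/-! ### Auxiliary development -/

section Aux

open LinearMap

/-- Tensoring with the injective inclusion `B → A` is injective. -/
lemma inj_lT (C : Type) [AddCommGroup C] [Module ℂ C] :
    Function.Injective (LinearMap.lTensor C B.val.toLinearMap) :=
  Module.Flat.lTensor_preserves_injective_linearMap _ fun x y h => Subtype.ext h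

variable {A B} in
lemma hc' (hc : ∀ b : ↥B,
      (TensorProduct.map LinearMap.id B.val.toLinearMap) (comulB b)
        = Coalgebra.comul (b : A)) (b : ↥B) :
    LinearMap.lTensor A B.val.toLinearMap (comulB b) = Coalgebra.comul (b : A) := hc b

variable {A B} in
lemma lT_eq_algMap' : LinearMap.lTensor A B.val.toLinearMap
    = (Algebra.TensorProduct.map (AlgHom.id ℂ A) B.val).toLinearMap :=
  TensorProduct.ext' fun _ _ => rfl

variable {A B} in
lemma lT_eq_algMap (w : A ⊗[ℂ] ↥B) :
    LinearMap.lTensor A B.val.toLinearMap w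
      = (Algebra.TensorProduct.map (AlgHom.id ℂ A) B.val) w :=
  DFunLike.congr_fun lT_eq_algMap' w

variable {A B comulB} in
lemma comulB_one (hc : ∀ b : ↥B,
      (TensorProduct.map LinearMap.id B.val.toLinearMap) (comulB b)
        = Coalgebra.comul (b : A)) : comulB 1 = 1 := by
  apply inj_lT A B A
  rw [hc' comulB hc 1, lT_eq_algMap, OneMemClass.coe_one, Bialgebra.comul_one]
  exact (map_one (Algebra.TensorProduct.map (AlgHom.id ℂ A) B.val)).symm

variable {A B comulB} in
lemma comulB_mul (hc : ∀ b : ↥B,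
      (TensorProduct.map LinearMap.id B.val.toLinearMap) (comulB b)
        = Coalgebra.comul (b : A)) (x y : ↥B) :
    comulB (x * y) = comulB x * comulB y := by
  apply inj_lT A B A
  rw [hc' comulB hc (x * y), lT_eq_algMap, MulMemClass.coe_mul, Bialgebra.comul_mul,
    ← hc' comulB hc x, ← hc' comulB hc y, lT_eq_algMap (comulB x), lT_eq_algMap (comulB y),
    ← map_mul (Algebra.TensorProduct.map (AlgHom.id ℂ A) B.val)]

/-- Contraction with the counit on the second leg. -/
def Emap : A ⊗[ℂ] ↥B →ₗ[ℂ] A :=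
  (TensorProduct.rid ℂ A).toLinearMap ∘ₗ LinearMap.lTensor A (epsB A B).toLinearMap

@[simp] lemma Emap_tmul (s : A) (x : ↥B) : Emap A B (s ⊗ₜ[ℂ] x) = epsB A B x • s := by
  simp [Emap, TensorProduct.rid_tmul]

variable {A B comulB} in
lemma Emap_comulB (hc : ∀ b : ↥B,
      (TensorProduct.map LinearMap.id B.val.toLinearMap) (comulB b)
        = Coalgebra.comul (b : A)) (b : ↥B) :
    Emap A B (comulB b) = (b : A) := by
  have h2 : LinearMap.lTensor A (epsB A B).toLinearMap (comulB b)
      = LinearMap.lTensor A (Coalgebra.counit (R := ℂ) (A := A))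
          (Coalgebra.comul (R := ℂ) (b : A)) := by
    rw [← hc' comulB hc b, ← LinearMap.comp_apply, ← LinearMap.comp_apply,
      ← LinearMap.lTensor_comp]
    rfl
  rw [Emap, LinearMap.comp_apply, h2, Coalgebra.lTensor_counit_comul]
  simp

variable {A B comulB} in
/-- Coassociativity for the coaction `comulB`. -/
lemma coassocB (hc : ∀ b : ↥B,
      (TensorProduct.map LinearMap.id B.val.toLinearMap) (comulB b)
        = Coalgebra.comul (b : A)) (b : ↥B) :
    (TensorProduct.assoc ℂ A A ↥B)
        ((Coalgebra.comul (R := ℂ) (A := A)).rTensor ↥B (comulB b))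
      = LinearMap.lTensor A comulB (comulB b) := by
  apply Module.Flat.lTensor_preserves_injective_linearMap (M := A)
    (LinearMap.lTensor A B.val.toLinearMap) (inj_lT A B A)
  have hnat : ∀ y : (A ⊗[ℂ] A) ⊗[ℂ] ↥B,
      LinearMap.lTensor A (LinearMap.lTensor A B.val.toLinearMap)
          ((TensorProduct.assoc ℂ A A ↥B) y)
        = (TensorProduct.assoc ℂ A A A)
            (LinearMap.lTensor (A ⊗[ℂ] A) B.val.toLinearMap y) := by
    intro y
    have := TensorProduct.map_map_assoc (LinearMap.id (M := A)) (LinearMap.id (M := A))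
      B.val.toLinearMap y
    simpa [LinearMap.lTensor, TensorProduct.map_id] using this
  have hcomp : (LinearMap.lTensor A B.val.toLinearMap) ∘ₗ comulB
      = (Coalgebra.comul (R := ℂ) (A := A)) ∘ₗ B.val.toLinearMap := by
    ext z; exact hc' comulB hc z
  have hmid : LinearMap.lTensor (A ⊗[ℂ] A) B.val.toLinearMap
      ((Coalgebra.comul (R := ℂ) (A := A)).rTensor ↥B (comulB b))
      = (Coalgebra.comul (R := ℂ) (A := A)).rTensor A
          (LinearMap.lTensor A B.val.toLinearMap (comulB b)) := by
    rw [← LinearMap.comp_apply, LinearMap.lTensor_comp_rTensor,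
      ← LinearMap.rTensor_comp_lTensor, LinearMap.comp_apply]
  have hRHS : LinearMap.lTensor A (LinearMap.lTensor A B.val.toLinearMap)
      (LinearMap.lTensor A comulB (comulB b))
      = LinearMap.lTensor A (Coalgebra.comul (R := ℂ) (A := A))
          (LinearMap.lTensor A B.val.toLinearMap (comulB b)) := by
    rw [← LinearMap.comp_apply, ← LinearMap.lTensor_comp, hcomp,
      LinearMap.lTensor_comp, LinearMap.comp_apply]
  rw [hnat, hmid, hc' comulB hc b, Coalgebra.coassoc_apply, hRHS, hc' comulB hc b]

variable (R : Submodule ℂ ↥B)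

/-- `Q = B⁺ / R`. -/
abbrev QB := ↥(Bplus A B) ⧸ R.comap (Bplus A B).subtype

lemma mul_mem_Bplus (b : ↥B) : ∀ x ∈ Bplus A B, x * b ∈ Bplus A B := by
  intro x hx
  simp only [Bplus, LinearMap.mem_ker, AlgHom.toLinearMap_apply, map_mul] at *
  rw [hx, zero_mul]

/-- Right multiplication by `b : B` on `B⁺`. -/
def mrB (b : ↥B) : ↥(Bplus A B) →ₗ[ℂ] ↥(Bplus A B) :=
  (LinearMap.mulRight ℂ b).restrict fun x hx => mul_mem_Bplus A B b x hx

@[simp] lemma mrB_coe (b : ↥B) (x : ↥(Bplus A B)) :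
    (mrB A B b x : ↥B) = (x : ↥B) * b := rfl

variable {R} in
lemma mrB_le (hR2 : ∀ x ∈ R, ∀ b ∈ Bplus A B, x * b ∈ R) (b : ↥B) :
    R.comap (Bplus A B).subtype ≤ (R.comap (Bplus A B).subtype).comap (mrB A B b) := by
  rintro ⟨x, hxB⟩ hx
  simp only [Submodule.mem_comap, Submodule.subtype_apply] at hx ⊢
  rw [mrB_coe]
  have h1 : x * plusB A B b ∈ R := hR2 x hx _ (plusB_mem A B b)
  have h2 : x * b = x * plusB A B b + epsB A B b • x := by
    have hb : plusB A B b = b - (epsB A B b) • 1 := by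
      simp [plusB, Algebra.algebraMap_eq_smul_one]
    rw [hb, mul_sub, mul_smul_comm, mul_one]
    abel
  rw [h2]
  exact R.add_mem h1 (R.smul_mem _ hx)

variable {R} in
/-- The right action of `B` on `Q = B⁺/R`. -/
def rhoQ (hR2 : ∀ x ∈ R, ∀ b ∈ Bplus A B, x * b ∈ R) :
    ↥B →ₗ[ℂ] (QB A B R →ₗ[ℂ] QB A B R) where
  toFun b := Submodule.mapQ _ _ (mrB A B b) (mrB_le A B hR2 b)
  map_add' b b' := by
    apply Submodule.linearMap_qext
    ext x
    simp only [LinearMap.comp_apply, Submodule.mkQ_apply, Submodule.mapQ_apply,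
      LinearMap.add_apply]
    rw [← Submodule.Quotient.mk_add]
    congr 1
    ext
    simp [mul_add]
  map_smul' k b := by
    apply Submodule.linearMap_qext
    ext x
    simp only [LinearMap.comp_apply, Submodule.mkQ_apply, Submodule.mapQ_apply,
      LinearMap.smul_apply, RingHom.id_apply]
    rw [← Submodule.Quotient.mk_smul]
    congr 1
    ext
    simp [mul_smul_comm]

variable {R} in
lemma rhoQ_mk (hR2 : ∀ x ∈ R, ∀ b ∈ Bplus A B, x * b ∈ R) (b : ↥B) (x : ↥(Bplus A B)) :
    rhoQ A B hR2 b ((R.comap (Bplus A B).subtype).mkQ x)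
      = (R.comap (Bplus A B).subtype).mkQ (mrB A B b x) := by
  simp [rhoQ, Submodule.mapQ_apply]

variable {R} in
lemma rhoQ_mul (hR2 : ∀ x ∈ R, ∀ b ∈ Bplus A B, x * b ∈ R) (x y : ↥B) (q : QB A B R) :
    rhoQ A B hR2 (x * y) q = rhoQ A B hR2 y (rhoQ A B hR2 x q) := by
  induction q using Submodule.Quotient.induction_on with
  | H z =>
    rw [show Submodule.Quotient.mk z = (R.comap (Bplus A B).subtype).mkQ z from rfl]
    rw [rhoQ_mk, rhoQ_mk, rhoQ_mk]
    congr 1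
    ext
    simp [mul_assoc]

variable {R} in
lemma rhoQ_one (hR2 : ∀ x ∈ R, ∀ b ∈ Bplus A B, x * b ∈ R) (q : QB A B R) :
    rhoQ A B hR2 1 q = q := by
  induction q using Submodule.Quotient.induction_on with
  | H z =>
    rw [show Submodule.Quotient.mk z = (R.comap (Bplus A B).subtype).mkQ z from rfl]
    rw [rhoQ_mk]
    congr 1
    ext
    simp

/-- The canonical projection `B → Q`. -/
def pQm : ↥B →ₗ[ℂ] QB A B R :=
  (R.comap (Bplus A B).subtype).mkQ ∘ₗ plusBc A B

variable {R} in
lemma pQm_mul (hR2 : ∀ x ∈ R, ∀ b ∈ Bplus A B, x * b ∈ R) (x y : ↥B) :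
    pQm A B R (x * y) = rhoQ A B hR2 y (pQm A B R x) + epsB A B x • pQm A B R y := by
  simp only [pQm, LinearMap.comp_apply, rhoQ_mk]
  rw [← map_smul, ← map_add]
  congr 1
  ext
  have : ∀ z : ↥B, ((plusBc A B z : ↥(Bplus A B)) : ↥B)
      = z - (epsB A B z) • 1 := by
    intro z
    simp [plusBc, plusB, Algebra.algebraMap_eq_smul_one]
  simp only [Submodule.coe_add, SetLike.val_smul, mrB_coe, this]
  rw [map_mul]
  rw [sub_mul, smul_mul_assoc, one_mul, smul_sub, smul_smul]
  abel

end Aux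


set_option maxHeartbeats 1000000
set_option synthInstance.maxHeartbeats 400000

section Aux2

variable (R : Submodule ℂ ↥B)

/-- Left action of `A` on `A ⊗ Q` (multiplication on the first leg). -/
def LmapD : A →ₗ[ℂ] ((A ⊗[ℂ] QB A B R) →ₗ[ℂ] (A ⊗[ℂ] QB A B R)) :=
  (LinearMap.rTensorHom (QB A B R)) ∘ₗ (LinearMap.mul ℂ A)

@[simp] lemma LmapD_tmul (a t : A) (q : QB A B R) :
    LmapD A B R a (t ⊗ₜ[ℂ] q) = (a * t) ⊗ₜ[ℂ] q := by
  simp [LmapD, LinearMap.rTensorHom, LinearMap.rTensor_tmul]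

lemma LmapD_eq (a : A) :
    LmapD A B R a = LinearMap.rTensor (QB A B R) (LinearMap.mulLeft ℂ a) := by
  apply TensorProduct.ext'
  intro t q
  simp [LinearMap.rTensor_tmul]

variable {R} in
/-- Right action of `B` on `A ⊗ Q`. -/
def HmapD (hR2 : ∀ x ∈ R, ∀ b ∈ Bplus A B, x * b ∈ R) :
    (A ⊗[ℂ] ↥B) →ₗ[ℂ] ((A ⊗[ℂ] QB A B R) →ₗ[ℂ] (A ⊗[ℂ] QB A B R)) :=
  TensorProduct.homTensorHomMap (RingHom.id ℂ) A (QB A B R) A (QB A B R) ∘ₗ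
    TensorProduct.map ((LinearMap.mul ℂ A).flip) (rhoQ A B hR2)

variable {R} in
@[simp] lemma HmapD_tmul (hR2 : ∀ x ∈ R, ∀ b ∈ Bplus A B, x * b ∈ R)
    (s : A) (x : ↥B) (t : A) (q : QB A B R) :
    HmapD A B hR2 (s ⊗ₜ[ℂ] x) (t ⊗ₜ[ℂ] q) = (t * s) ⊗ₜ[ℂ] (rhoQ A B hR2 x q) := by
  simp [HmapD, TensorProduct.homTensorHomMap_apply]

/-- The derivation `b ↦ b₍₁₎ ⊗ p(b₍₂₎⁺)`. -/
def DmapD : ↥B →ₗ[ℂ] A ⊗[ℂ] QB A B R :=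
  LinearMap.lTensor A (pQm A B R) ∘ₗ comulB

/-- The map `T = (Δ ⊗ id) : A ⊗ Q → A ⊗ (A ⊗ Q)` (after reassociation). -/
def TmapD : (A ⊗[ℂ] QB A B R) →ₗ[ℂ] A ⊗[ℂ] (A ⊗[ℂ] QB A B R) :=
  (TensorProduct.assoc ℂ A A (QB A B R)).toLinearMap ∘ₗ
    LinearMap.rTensor (QB A B R) (Coalgebra.comul (R := ℂ) (A := A))

@[simp] lemma TmapD_tmul (s : A) (q : QB A B R) :
    TmapD A B R (s ⊗ₜ[ℂ] q)
      = (TensorProduct.assoc ℂ A A (QB A B R)) ((Coalgebra.comul (R := ℂ) s) ⊗ₜ[ℂ] q) := by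
  simp [TmapD, LinearMap.rTensor_tmul]

/-- The coaction-type operator `X` on `A ⊗ (A ⊗ Q)`. -/
def XmapD : (A ⊗[ℂ] ↥B) →ₗ[ℂ]
    ((A ⊗[ℂ] (A ⊗[ℂ] QB A B R)) →ₗ[ℂ] (A ⊗[ℂ] (A ⊗[ℂ] QB A B R))) :=
  TensorProduct.homTensorHomMap (RingHom.id ℂ) A (A ⊗[ℂ] QB A B R) A (A ⊗[ℂ] QB A B R) ∘ₗ
    TensorProduct.map (LinearMap.mul ℂ A) (LmapD A B R ∘ₗ B.val.toLinearMap)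

@[simp] lemma XmapD_tmul (t : A) (y : ↥B) (s : A) (n : A ⊗[ℂ] QB A B R) :
    XmapD A B R (t ⊗ₜ[ℂ] y) (s ⊗ₜ[ℂ] n) = (t * s) ⊗ₜ[ℂ] (LmapD A B R (y : A) n) := by
  simp [XmapD, TensorProduct.homTensorHomMap_apply]

variable {R} in
/-- Key Leibniz-type identity at the level of `A ⊗ B`. -/
lemma Kmul (hR2 : ∀ x ∈ R, ∀ b ∈ Bplus A B, x * b ∈ R) (u v : A ⊗[ℂ] ↥B) :
    LinearMap.lTensor A (pQm A B R) (u * v)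
      = HmapD A B hR2 v (LinearMap.lTensor A (pQm A B R) u)
        + LmapD A B R (Emap A B u) (LinearMap.lTensor A (pQm A B R) v) := by
  induction u using TensorProduct.induction_on with
  | zero => simp
  | add u₁ u₂ h1 h2 => simp only [add_mul, map_add, LinearMap.add_apply, h1, h2]; abel
  | tmul s x =>
    induction v using TensorProduct.induction_on with
    | zero => simp
    | add v₁ v₂ h1 h2 => simp only [mul_add, map_add, LinearMap.add_apply, h1, h2]; abel
    | tmul t y =>
      rw [Algebra.TensorProduct.tmul_mul_tmul]
      simp only [LinearMap.lTensor_tmul, HmapD_tmul, Emap_tmul, map_smul,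
        LinearMap.smul_apply, LmapD_tmul]
      rw [pQm_mul A B hR2 x y, TensorProduct.tmul_add]
      congr 1
      simp [TensorProduct.tmul_smul, smul_mul_assoc, TensorProduct.smul_tmul']

variable {R} in
lemma Hmul (hR2 : ∀ x ∈ R, ∀ b ∈ Bplus A B, x * b ∈ R) (u v : A ⊗[ℂ] ↥B)
    (m : A ⊗[ℂ] QB A B R) :
    HmapD A B hR2 (u * v) m = HmapD A B hR2 v (HmapD A B hR2 u m) := by
  induction u using TensorProduct.induction_on with
  | zero => simp
  | add u₁ u₂ h1 h2 => simp only [add_mul, map_add, LinearMap.add_apply, h1, h2]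
  | tmul s x =>
    induction v using TensorProduct.induction_on with
    | zero => simp
    | add v₁ v₂ h1 h2 => simp only [mul_add, map_add, LinearMap.add_apply, h1, h2]
    | tmul t y =>
      induction m using TensorProduct.induction_on with
      | zero => simp
      | add m₁ m₂ h1 h2 => simp only [map_add, h1, h2]
      | tmul w q =>
        rw [Algebra.TensorProduct.tmul_mul_tmul]
        simp only [HmapD_tmul]
        rw [rhoQ_mul A B hR2, mul_assoc]

variable {R} in
lemma Hone (hR2 : ∀ x ∈ R, ∀ b ∈ Bplus A B, x * b ∈ R) (m : A ⊗[ℂ] QB A B R) :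
    HmapD A B hR2 1 m = m := by
  induction m using TensorProduct.induction_on with
  | zero => simp
  | add m₁ m₂ h1 h2 => simp only [map_add, h1, h2]
  | tmul w q =>
    rw [show (1 : A ⊗[ℂ] ↥B) = (1 : A) ⊗ₜ[ℂ] (1 : ↥B) from rfl]
    rw [HmapD_tmul, mul_one, rhoQ_one A B hR2]

variable {R} in
lemma LHcomm (hR2 : ∀ x ∈ R, ∀ b ∈ Bplus A B, x * b ∈ R) (a : A) (u : A ⊗[ℂ] ↥B)
    (m : A ⊗[ℂ] QB A B R) :
    LmapD A B R a (HmapD A B hR2 u m) = HmapD A B hR2 u (LmapD A B R a m) := by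
  induction u using TensorProduct.induction_on with
  | zero => simp
  | add u₁ u₂ h1 h2 => simp only [map_add, LinearMap.add_apply, h1, h2]
  | tmul s x =>
    induction m using TensorProduct.induction_on with
    | zero => simp
    | add m₁ m₂ h1 h2 => simp only [map_add, h1, h2]
    | tmul w q =>
      simp only [HmapD_tmul, LmapD_tmul, mul_assoc]

end Aux2


section Aux3

variable (R : Submodule ℂ ↥B)

lemma E2aux (u : A ⊗[ℂ] ↥B) (z : A ⊗[ℂ] A) (q : QB A B R) :
    (TensorProduct.assoc ℂ A A (QB A B R))
        (((LinearMap.lTensor A B.val.toLinearMap u) * z) ⊗ₜ[ℂ] q)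
      = XmapD A B R u ((TensorProduct.assoc ℂ A A (QB A B R)) (z ⊗ₜ[ℂ] q)) := by
  induction u using TensorProduct.induction_on with
  | zero => simp
  | add u₁ u₂ h1 h2 =>
    simp only [map_add, LinearMap.add_apply, add_mul, TensorProduct.add_tmul, h1, h2]
  | tmul t y =>
    induction z using TensorProduct.induction_on with
    | zero => simp
    | add z₁ z₂ h1 h2 =>
      simp only [map_add, mul_add, TensorProduct.add_tmul, h1, h2]
    | tmul z₁ z₂ =>
      rw [LinearMap.lTensor_tmul, Algebra.TensorProduct.tmul_mul_tmul,
        TensorProduct.assoc_tmul, TensorProduct.assoc_tmul, XmapD_tmul, LmapD_tmul]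
      rfl

variable {comulB} in
lemma E2 (hc : ∀ b : ↥B,
      (TensorProduct.map LinearMap.id B.val.toLinearMap) (comulB b)
        = Coalgebra.comul (b : A)) (a : ↥B) (m : A ⊗[ℂ] QB A B R) :
    TmapD A B R (LmapD A B R (a : A) m) = XmapD A B R (comulB a) (TmapD A B R m) := by
  induction m using TensorProduct.induction_on with
  | zero => simp
  | add m₁ m₂ h1 h2 => simp only [map_add, h1, h2]
  | tmul s q =>
    rw [LmapD_tmul, TmapD_tmul, TmapD_tmul, Bialgebra.comul_mul,
      ← hc' comulB hc a]
    exact E2aux A B R (comulB a) (Coalgebra.comul s) q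

variable {comulB} in
lemma E1 (hc : ∀ b : ↥B,
      (TensorProduct.map LinearMap.id B.val.toLinearMap) (comulB b)
        = Coalgebra.comul (b : A)) (b : ↥B) :
    TmapD A B R (DmapD A B comulB R b)
      = LinearMap.lTensor A (DmapD A B comulB R) (comulB b) := by
  have h1 : (Coalgebra.comul (R := ℂ) (A := A)).rTensor (QB A B R) ∘ₗ
      (pQm A B R).lTensor A
      = ((pQm A B R).lTensor (A ⊗[ℂ] A)) ∘ₗ
        (Coalgebra.comul (R := ℂ) (A := A)).rTensor ↥B := by
    rw [LinearMap.rTensor_comp_lTensor, LinearMap.lTensor_comp_rTensor]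
  have hnat : ∀ y : (A ⊗[ℂ] A) ⊗[ℂ] ↥B,
      (TensorProduct.assoc ℂ A A (QB A B R)) ((pQm A B R).lTensor (A ⊗[ℂ] A) y)
        = LinearMap.lTensor A (LinearMap.lTensor A (pQm A B R))
            ((TensorProduct.assoc ℂ A A ↥B) y) := by
    intro y
    have := TensorProduct.map_map_assoc (LinearMap.id (M := A)) (LinearMap.id (M := A))
      (pQm A B R) y
    simpa [LinearMap.lTensor, TensorProduct.map_id] using this.symm
  rw [TmapD, DmapD, LinearMap.comp_apply, LinearMap.comp_apply]
  simp only [LinearEquiv.coe_coe]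
  have hstep := DFunLike.congr_fun h1 (comulB b)
  simp only [LinearMap.comp_apply] at hstep
  rw [hstep, hnat, coassocB hc b, ← LinearMap.comp_apply, ← LinearMap.lTensor_comp]

variable {comulB} in
lemma SwId (G2 : ↥B ⊗[ℂ] ↥B →ₗ[ℂ] A ⊗[ℂ] QB A B R)
    (hG : ∀ y x : ↥B, G2 (y ⊗ₜ[ℂ] x)
      = LmapD A B R (y : A) (DmapD A B comulB R x))
    (u v : A ⊗[ℂ] ↥B) :
    (TensorProduct.map (LinearMap.mul' ℂ A) G2)
        ((TensorProduct.tensorTensorTensorComm ℂ A ↥B A ↥B).toLinearMap (u ⊗ₜ[ℂ] v))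
      = XmapD A B R u (LinearMap.lTensor A (DmapD A B comulB R) v) := by
  induction u using TensorProduct.induction_on with
  | zero =>
    simp only [TensorProduct.zero_tmul, LinearMap.map_zero, LinearMap.zero_apply]
  | add u₁ u₂ h1 h2 =>
    simp only [TensorProduct.add_tmul, LinearMap.map_add, LinearMap.add_apply, h1, h2]
  | tmul t y =>
    induction v using TensorProduct.induction_on with
    | zero =>
      simp only [TensorProduct.tmul_zero, LinearMap.map_zero, LinearMap.zero_apply]
    | add v₁ v₂ h1 h2 =>
      simp only [TensorProduct.tmul_add, LinearMap.map_add, h1, h2]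
    | tmul s x =>
      simp only [LinearEquiv.coe_coe]
      rw [TensorProduct.tensorTensorTensorComm_tmul, TensorProduct.map_tmul,
        LinearMap.lTensor_tmul, XmapD_tmul, LinearMap.mul'_apply, hG]

variable {comulB R} in
lemma equiv_of (hc : ∀ b : ↥B,
      (TensorProduct.map LinearMap.id B.val.toLinearMap) (comulB b)
        = Coalgebra.comul (b : A))
    (δ : BimodDeriv ↥B (A ⊗[ℂ] QB A B R))
    (hl : ∀ y x : ↥B, δ.l y (δ.d x) = LmapD A B R (y : A) (DmapD A B comulB R x)) :
    IsEquivariant A B comulB δ := by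
  intro L hL
  have hpt : ∀ y x : ↥B, sweedlerMap A B comulB δ (y ⊗ₜ[ℂ] x)
      = TmapD A B R (δ.l y (δ.d x)) := by
    intro y x
    rw [hl, E2 A B R hc y, E1 A B R hc x]
    simp only [sweedlerMap, LinearMap.comp_apply, TensorProduct.map_tmul]
    exact SwId A B R _ (fun y x => by
      rw [TensorProduct.lift.tmul, LinearMap.mk₂_apply, hl]) (comulB y) (comulB x)
  calc (L.map fun p => sweedlerMap A B comulB δ (p.1 ⊗ₜ[ℂ] p.2)).sum
      = (L.map ((TmapD A B R) ∘ fun p : ↥B × ↥B => δ.l p.1 (δ.d p.2))).sum := by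
        congr 1
        refine List.map_congr_left fun p _ => ?_
        exact hpt p.1 p.2
    _ = 0 := by
        rw [← List.map_map, ← map_list_sum, hL, map_zero]

end Aux3

/-- Theorem 1 (i), existence part: Let `A` be a Hopf algebra,
`B` a left coideal subalgebra of `A` (with coaction `comulB` compatible with
`Δ`), and `R` a right ideal of `B⁺` with canonical projection
`p : B⁺ → B⁺/R`.  Then `a·δ_R(b) := a b₍₁₎ ⊗ p(b₍₂₎⁺)` uniquely determines an
equivariant derivation `δ_R` of `B` whose bimodule `Γ(δ_R) ⊆ A ⊗ B⁺/R`
carries the left action `c·(a δb) = (ca) δb`. -/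
theorem exists_uniquely_equivariant_derivation_of_right_ideal
    (hcomulB : ∀ b : ↥B,
      (TensorProduct.map LinearMap.id B.val.toLinearMap) (comulB b)
        = Coalgebra.comul (b : A))
    (R : Submodule ℂ ↥B) (hR1 : R ≤ Bplus A B)
    (hR2 : ∀ x ∈ R, ∀ b ∈ Bplus A B, x * b ∈ R) :
    -- `Q = B⁺/R` and the formula `Φ a b = a b₍₁₎ ⊗ p(b₍₂₎⁺)`:
    let Q := ↥(Bplus A B) ⧸ (R.comap (Bplus A B).subtype)
    let pQ : ↥B →ₗ[ℂ] Q := (R.comap (Bplus A B).subtype).mkQ ∘ₗ plusBc A B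
    let Φ : ↥B → ↥B → A ⊗[ℂ] Q := fun a b =>
      (TensorProduct.map (LinearMap.mulLeft ℂ (a : A)) pQ) (comulB b)
    ∃ δ : BimodDeriv ↥B (A ⊗[ℂ] Q),
      (∀ a b : ↥B, δ.l a (δ.d b) = Φ a b) ∧
      (∀ c a b : ↥B, δ.l c (Φ a b) = Φ (c * a) b) ∧
      IsEquivariant A B comulB δ ∧
      -- uniqueness: the formula determines the derivation on `Γ(δ_R)`
      (∀ δ' : BimodDeriv ↥B (A ⊗[ℂ] Q),
        (∀ a b : ↥B, δ'.l a (δ'.d b) = Φ a b) →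
        ∀ L : List (↥B × ↥B),
          (L.map fun p => δ'.l p.1 (δ'.d p.2)).sum
            = (L.map fun p => δ.l p.1 (δ.d p.2)).sum) := by
  intro Q pQ Φ
  let δ₀ : BimodDeriv ↥B (A ⊗[ℂ] Q) :=
    { l := LmapD A B R ∘ₗ B.val.toLinearMap
      r := HmapD A B hR2 ∘ₗ comulB
      l_mul := by
        intro a b m
        simp only [LinearMap.comp_apply, AlgHom.toLinearMap_apply, Subalgebra.coe_val]
        rw [LmapD_eq, LmapD_eq, LmapD_eq, MulMemClass.coe_mul, LinearMap.mulLeft_mul,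
          LinearMap.rTensor_comp, LinearMap.comp_apply]
      l_one := by
        intro m
        simp only [LinearMap.comp_apply, AlgHom.toLinearMap_apply, Subalgebra.coe_val]
        rw [OneMemClass.coe_one, LmapD_eq, LinearMap.mulLeft_one, LinearMap.rTensor_id,
          LinearMap.id_apply]
      r_mul := by
        intro a b m
        simp only [LinearMap.comp_apply]
        rw [comulB_mul hcomulB]
        exact Hmul A B hR2 (comulB a) (comulB b) m
      r_one := by
        intro m
        simp only [LinearMap.comp_apply]
        rw [comulB_one hcomulB]
        exact Hone A B hR2 m
      lr_comm := by
        intro a b m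
        simp only [LinearMap.comp_apply, AlgHom.toLinearMap_apply, Subalgebra.coe_val]
        exact LHcomm A B hR2 (a : A) (comulB b) m
      d := DmapD A B comulB R
      leibniz := by
        intro a b
        simp only [LinearMap.comp_apply, AlgHom.toLinearMap_apply, Subalgebra.coe_val,
          DmapD, comulB_mul hcomulB]
        rw [Kmul A B hR2 (comulB a) (comulB b), Emap_comulB hcomulB]
        rw [add_comm]
    }
  have hΦ : ∀ a b : ↥B, δ₀.l a (δ₀.d b) = Φ a b := by
    intro a b
    show LmapD A B R (a : A) (LinearMap.lTensor A (pQm A B R) (comulB b))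
        = (TensorProduct.map (LinearMap.mulLeft ℂ (a : A)) (pQm A B R)) (comulB b)
    rw [LmapD_eq, ← LinearMap.comp_apply, LinearMap.rTensor_comp_lTensor]
  refine ⟨δ₀, hΦ, ?_, ?_, ?_⟩
  · intro c a b
    show LmapD A B R (c : A)
        ((TensorProduct.map (LinearMap.mulLeft ℂ (a : A)) (pQm A B R)) (comulB b))
      = (TensorProduct.map (LinearMap.mulLeft ℂ ((c * a : ↥B) : A)) (pQm A B R)) (comulB b)
    rw [LmapD_eq, LinearMap.rTensor, ← LinearMap.comp_apply, ← TensorProduct.map_comp,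
      ← LinearMap.mulLeft_mul, LinearMap.id_comp, ← MulMemClass.coe_mul]
  · exact equiv_of A B hcomulB δ₀ fun y x => rfl
  · intro δ' h' L
    have he : (fun p : ↥B × ↥B => δ'.l p.1 (δ'.d p.2))
        = fun p : ↥B × ↥B => δ₀.l p.1 (δ₀.d p.2) := by
      funext p
      rw [h' p.1 p.2, hΦ p.1 p.2]
    rw [he]

end
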